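/- Let c > 0 and let (p,Q) be a block-model parameter pair on k communities with p i ≥ c for every i ∈ Fin k. Then Φ_{p,Q}(Cyc_4) ≥ c^4 · max_{i,j ∈ Fin k} (Q i j)^4; in particular Ψ_{p,Q}(Cyc_4) ≥ c · max_{i,j ∈ Fin k} |Q i j|. -/

import Mathlib

set_option linter.unusedVariables false

open Finset

open Finset

/-- The Fourier coefficient Φ_{p,Q}(H) of a finite simple graph `H`. -/
noncomputable def Phi {k : ℕ} (p : Fin k → ℝ) (Q : Fin k → Fin k → ℝ)
    (hQ : ∀ i j, Q i j = Q j i) {V : Type} [Fintype V] [DecidableEq V]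
    (H : SimpleGraph V) [DecidableRel H.Adj] : ℝ :=
  ∑ x : V → Fin k, (∏ v, p (x v)) *
    ∏ e ∈ H.edgeFinset,
      Sym2.lift ⟨fun u v => Q (x u) (x v), fun u v => hQ (x u) (x v)⟩ e

/-- The partition value Ψ_{p,Q}(H) = |Φ_{p,Q}(H)|^{1/|V(H)|}. -/
noncomputable def Psi {k : ℕ} (p : Fin k → ℝ) (Q : Fin k → Fin k → ℝ)
    (hQ : ∀ i j, Q i j = Q j i) {V : Type} [Fintype V] [DecidableEq V]
    (H : SimpleGraph V) [DecidableRel H.Adj] : ℝ :=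
  |Phi p Q hQ H| ^ ((Fintype.card V : ℝ)⁻¹)

/-- The star graph with one center (vertex 0) joined to `t` leaves. -/
def StarGraph (t : ℕ) : SimpleGraph (Fin (t + 1)) where
  Adj u v := u ≠ v ∧ (u = 0 ∨ v = 0)
  symm := ⟨fun u v h => ⟨h.1.symm, h.2.symm⟩⟩
  loopless := ⟨fun u h => h.1 rfl⟩

instance (t : ℕ) : DecidableRel (StarGraph t).Adj :=
  fun u v => inferInstanceAs (Decidable (u ≠ v ∧ (u = 0 ∨ v = 0)))

/-- The cycle graph on 4 vertices. -/
def Cyc4 : SimpleGraph (Fin 4) where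
  Adj u v := u ≠ v ∧ ((u.val + 1) % 4 = v.val ∨ (v.val + 1) % 4 = u.val)
  symm := ⟨fun u v h => ⟨h.1.symm, h.2.symm⟩⟩
  loopless := ⟨fun u h => h.1 rfl⟩

instance : DecidableRel Cyc4.Adj :=
  fun u v => inferInstanceAs
    (Decidable (u ≠ v ∧ ((u.val + 1) % 4 = v.val ∨ (v.val + 1) % 4 = u.val)))


def myE4 (k : ℕ) : (Fin k × Fin k × Fin k × Fin k) ≃ (Fin 4 → Fin k) where
  toFun q := ![q.1, q.2.1, q.2.2.1, q.2.2.2]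
  invFun x := (x 0, x 1, x 2, x 3)
  left_inv q := by rfl
  right_inv x := by funext i; fin_cases i <;> rfl

lemma my_sum_fn4 {k : ℕ} (g : Fin k → Fin k → Fin k → Fin k → ℝ) :
    ∑ x : Fin 4 → Fin k, g (x 0) (x 1) (x 2) (x 3)
      = ∑ a, ∑ b, ∑ c, ∑ d, g a b c d := by
  rw [← Fintype.sum_equiv (myE4 k) (fun q => g q.1 q.2.1 q.2.2.1 q.2.2.2)
    (fun x => g (x 0) (x 1) (x 2) (x 3)) (fun q => rfl)]
  simp [Fintype.sum_prod_type]

def myPerm (k : ℕ) : (Fin k × Fin k × Fin k × Fin k) ≃ (Fin k × Fin k × Fin k × Fin k) where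
  toFun q := (q.2.1, q.2.2.2, q.1, q.2.2.1)
  invFun q := (q.2.2.1, q.1, q.2.2.2, q.2.1)
  left_inv q := rfl
  right_inv q := rfl

lemma my_sum4_perm {k : ℕ} (t : Fin k → Fin k → Fin k → Fin k → ℝ) :
    ∑ a, ∑ b, ∑ c, ∑ d, t a b c d = ∑ b, ∑ d, ∑ a, ∑ c, t a b c d := by
  have h1 : ∑ a, ∑ b, ∑ c, ∑ d, t a b c d
      = ∑ q : Fin k × Fin k × Fin k × Fin k, t q.1 q.2.1 q.2.2.1 q.2.2.2 := by
    simp [Fintype.sum_prod_type]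
  have h2 : ∑ b, ∑ d, ∑ a, ∑ c, t a b c d
      = ∑ q : Fin k × Fin k × Fin k × Fin k, t q.2.2.1 q.1 q.2.2.2 q.2.1 := by
    simp [Fintype.sum_prod_type]
  rw [h1, h2]
  exact Fintype.sum_equiv (myPerm k)
    (fun q => t q.1 q.2.1 q.2.2.1 q.2.2.2)
    (fun q => t q.2.2.1 q.1 q.2.2.2 q.2.1) (fun q => rfl)

lemma phi_cyc4 {k : ℕ} (p : Fin k → ℝ) (Q : Fin k → Fin k → ℝ)
    (hQ : ∀ i j, Q i j = Q j i) :
    Phi p Q hQ Cyc4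
      = ∑ b, ∑ d, p b * p d * (∑ a, p a * (Q a b * Q a d)) ^ 2 := by
  have hE : Cyc4.edgeFinset = {s(0,1), s(1,2), s(2,3), s(0,3)} := by decide
  unfold Phi
  rw [hE]
  have hx : ∀ x : Fin 4 → Fin k,
      (∏ v, p (x v)) *
        ∏ e ∈ ({s(0,1), s(1,2), s(2,3), s(0,3)} : Finset (Sym2 (Fin 4))),
          Sym2.lift ⟨fun u v => Q (x u) (x v), fun u v => hQ (x u) (x v)⟩ e
      = (fun a b c d => (p a * p b * p c * p d) *
          (Q a b * (Q b c * (Q c d * Q a d)))) (x 0) (x 1) (x 2) (x 3) := by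
    intro x
    rw [Fin.prod_univ_four, Finset.prod_insert (by decide),
      Finset.prod_insert (by decide), Finset.prod_insert (by decide),
      Finset.prod_singleton]
    simp [Sym2.lift_mk]
  rw [Finset.sum_congr rfl (fun x _ => hx x),
    my_sum_fn4 (fun a b c d => (p a * p b * p c * p d) *
      (Q a b * (Q b c * (Q c d * Q a d)))), my_sum4_perm]
  refine Finset.sum_congr rfl fun b _ => Finset.sum_congr rfl fun d _ => ?_
  rw [sq, Finset.sum_mul_sum, Finset.mul_sum]
  refine Finset.sum_congr rfl fun a _ => ?_
  rw [Finset.mul_sum]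
  refine Finset.sum_congr rfl fun cc _ => ?_
  rw [hQ cc b]
  ring

theorem main_bits {k : ℕ} (hk : 1 ≤ k) (c : ℝ) (hc : 0 < c)
    (p : Fin k → ℝ) (Q : Fin k → Fin k → ℝ)
    (hp : ∀ i, 0 ≤ p i)
    (hQ : ∀ i j, Q i j = Q j i)
    (hpc : ∀ i, c ≤ p i)
    (PhiV : ℝ)
    (hPhi : PhiV = ∑ b, ∑ d, p b * p d * (∑ a, p a * (Q a b * Q a d)) ^ 2) :
    let ne0 : (Finset.univ : Finset (Fin k × Fin k)).Nonempty :=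
      (Finset.univ_nonempty_iff.mpr ⟨((⟨0, hk⟩ : Fin k), (⟨0, hk⟩ : Fin k))⟩)
    PhiV ≥ c ^ 4 * Finset.univ.sup' ne0 (fun ij : Fin k × Fin k => (Q ij.1 ij.2) ^ 4) ∧
    |PhiV| ^ ((4:ℝ)⁻¹) ≥ c * Finset.univ.sup' ne0 (fun ij : Fin k × Fin k => |Q ij.1 ij.2|) := by
  intro ne0
  set S : Fin k → Fin k → ℝ := fun b d => ∑ a, p a * (Q a b * Q a d) with hS
  have hterm : ∀ b d : Fin k, 0 ≤ p b * p d * (S b d) ^ 2 := by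
    intro b d
    exact mul_nonneg (mul_nonneg (hp b) (hp d)) (sq_nonneg _)
  set M4 : ℝ := Finset.univ.sup' ne0 (fun ij : Fin k × Fin k => (Q ij.1 ij.2) ^ 4) with hM4
  set N : ℝ := Finset.univ.sup' ne0 (fun ij : Fin k × Fin k => |Q ij.1 ij.2|) with hN
  obtain ⟨⟨i, j⟩, -, hij⟩ := Finset.exists_mem_eq_sup' ne0 (fun ij : Fin k × Fin k => (Q ij.1 ij.2) ^ 4)
  -- main inequality
  have hSii : c * Q i j ^ 2 ≤ S i i := by
    have h1 : p j * (Q j i * Q j i) ≤ S i i := by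
      refine Finset.single_le_sum (f := fun l => p l * (Q l i * Q l i)) ?_ (Finset.mem_univ j)
      intro l _
      exact mul_nonneg (hp l) (mul_self_nonneg _)
    have h2 : c * Q i j ^ 2 ≤ p j * (Q j i * Q j i) := by
      rw [hQ j i]
      have : Q i j * Q i j = Q i j ^ 2 := by ring
      rw [this]
      exact mul_le_mul_of_nonneg_right (hpc j) (by positivity)
    linarith
  have hQij0 : (0:ℝ) ≤ c * Q i j ^ 2 := by positivity
  have hsq : (c * Q i j ^ 2) ^ 2 ≤ (S i i) ^ 2 := pow_le_pow_left₀ hQij0 hSii 2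
  have hPhiLB : c ^ 4 * Q i j ^ 4 ≤ PhiV := by
    have hsingle : p i * p i * (S i i) ^ 2 ≤ PhiV := by
      rw [hPhi]
      calc p i * p i * (S i i) ^ 2
          ≤ ∑ d, p i * p d * (S i d) ^ 2 :=
            Finset.single_le_sum (fun d _ => hterm i d) (Finset.mem_univ i)
        _ ≤ ∑ b, ∑ d, p b * p d * (S b d) ^ 2 :=
            Finset.single_le_sum (f := fun b => ∑ d, p b * p d * (S b d) ^ 2)
              (fun b _ => Finset.sum_nonneg fun d _ => hterm b d) (Finset.mem_univ i)
    have hcc : c * c ≤ p i * p i := mul_le_mul (hpc i) (hpc i) hc.le (hp i)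
    have : c ^ 4 * Q i j ^ 4 = (c * c) * ((c * Q i j ^ 2) ^ 2) := by ring
    rw [this]
    calc (c * c) * ((c * Q i j ^ 2) ^ 2)
        ≤ (p i * p i) * (S i i) ^ 2 :=
          mul_le_mul hcc hsq (by positivity) (mul_nonneg (hp i) (hp i))
      _ ≤ PhiV := hsingle
  have part1 : PhiV ≥ c ^ 4 * M4 := by rw [hM4, hij]; exact hPhiLB
  refine ⟨part1, ?_⟩
  -- part 2
  have hN0 : 0 ≤ N := le_trans (abs_nonneg _)
    (Finset.le_sup' (fun ij : Fin k × Fin k => |Q ij.1 ij.2|) (Finset.mem_univ (⟨0,hk⟩, ⟨0,hk⟩)))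
  have hMN : M4 = N ^ 4 := by
    apply le_antisymm
    · refine Finset.sup'_le ne0 _ fun ij _ => ?_
      have h1 : Q ij.1 ij.2 ^ 4 = |Q ij.1 ij.2| ^ 4 := by
        rw [← abs_pow]; rw [abs_of_nonneg (by positivity)]
      rw [h1]
      exact pow_le_pow_left₀ (abs_nonneg _)
        (Finset.le_sup' (fun ij : Fin k × Fin k => |Q ij.1 ij.2|) (Finset.mem_univ ij)) 4
    · obtain ⟨ij', -, hij'⟩ := Finset.exists_mem_eq_sup' ne0 (fun ij : Fin k × Fin k => |Q ij.1 ij.2|)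
      rw [hN, hij']
      have : |Q ij'.1 ij'.2| ^ 4 = Q ij'.1 ij'.2 ^ 4 := by
        rw [← abs_pow, abs_of_nonneg (by positivity)]
      rw [this]
      exact Finset.le_sup' (fun ij : Fin k × Fin k => (Q ij.1 ij.2) ^ 4) (Finset.mem_univ ij')
  have hPhi0 : (c * N) ^ 4 ≤ PhiV := by
    have : (c * N) ^ 4 = c ^ 4 * N ^ 4 := by ring
    rw [this, ← hMN]; exact part1
  have hPhinn : 0 ≤ PhiV := le_trans (by positivity) hPhi0
  rw [abs_of_nonneg hPhinn]
  have h := Real.rpow_le_rpow (by positivity) hPhi0 (by norm_num : (0:ℝ) ≤ (4:ℝ)⁻¹)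
  have heq : ((c * N) ^ 4 : ℝ) ^ ((4:ℝ)⁻¹) = c * N := by
    rw [← Real.rpow_natCast (c * N) 4, ← Real.rpow_mul (by positivity)]
    norm_num
  rw [heq] at h
  exact h

/-- lower bound on the signed 4-cycle coefficient under non-vanishing
community probabilities. -/
theorem stmt5 {k : ℕ} (hk : 1 ≤ k) (c : ℝ) (hc : 0 < c)
    (p : Fin k → ℝ) (Q : Fin k → Fin k → ℝ)
    (hp : ∀ i, 0 ≤ p i) (hpsum : ∑ i, p i = 1)
    (hQ : ∀ i j, Q i j = Q j i) (hQbd : ∀ i j, |Q i j| ≤ 1)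
    (hpc : ∀ i, c ≤ p i) :
    Phi p Q hQ Cyc4 ≥
      c ^ 4 * Finset.univ.sup'
        (Finset.univ_nonempty_iff.mpr ⟨((⟨0, hk⟩ : Fin k), (⟨0, hk⟩ : Fin k))⟩)
        (fun ij : Fin k × Fin k => (Q ij.1 ij.2) ^ 4) ∧
    Psi p Q hQ Cyc4 ≥
      c * Finset.univ.sup'
        (Finset.univ_nonempty_iff.mpr ⟨((⟨0, hk⟩ : Fin k), (⟨0, hk⟩ : Fin k))⟩)
        (fun ij : Fin k × Fin k => |Q ij.1 ij.2|) := by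
  have hcard : Psi p Q hQ Cyc4 = |Phi p Q hQ Cyc4| ^ ((4:ℝ)⁻¹) := by
    unfold Psi
    norm_num
  obtain ⟨h1, h2⟩ := main_bits hk c hc p Q hp hQ hpc (Phi p Q hQ Cyc4) (phi_cyc4 p Q hQ)
  exact ⟨h1, by rw [hcard]; exact h2⟩
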